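/- arXiv:2203.10947 — 2 statements merged into one kernel-verified Lean document; each statement's English description precedes it below -/
import Mathlib

section
/- Let a ≥ 1 and (q_k)_{k≥0} be a bounded sequence in a real Hilbert space H such that q_{k+1} + (k/a)(q_{k+1} - q_k) converges to l ∈ H as k → ∞. Then q_k converges to l as k → ∞. -/
open Filter Topology

theorem stmt_0
    {H : Type*} [NormedAddCommGroup H] [InnerProductSpace ℝ H] [CompleteSpace H]
    (a : ℝ) (ha : 1 ≤ a) (q : ℕ → H) (l : H)
    (hbd : ∃ M : ℝ, ∀ k, ‖q k‖ ≤ M)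
    (hconv : Tendsto (fun k : ℕ => q (k + 1) + ((k : ℝ) / a) • (q (k + 1) - q k))
      atTop (𝓝 l)) :
    Tendsto q atTop (𝓝 l) := by
  obtain ⟨M, hM⟩ := hbd
  have ha0 : (0:ℝ) < a := lt_of_lt_of_le one_pos ha
  set v : ℕ → H := fun k => q (k + 1) + ((k : ℝ) / a) • (q (k + 1) - q k) with hv
  -- key recursion
  have key : ∀ k : ℕ, q (k+1) - l
      = ((k:ℝ)/((k:ℝ)+a)) • (q k - l) + (a/((k:ℝ)+a)) • (v k - l) := by
    intro k
    have hk : (0:ℝ) < (k:ℝ) + a := by positivity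
    simp only [hv]
    match_scalars <;> (field_simp; try ring)
  set x : ℕ → ℝ := fun n => ‖q n - l‖ with hx
  have hxnn : ∀ n, 0 ≤ x n := fun n => norm_nonneg _
  have hC : ∀ n, x n ≤ M + ‖l‖ := by
    intro n
    calc x n ≤ ‖q n‖ + ‖l‖ := norm_sub_le _ _
    _ ≤ M + ‖l‖ := by linarith [hM n]
  have hrec : ∀ k : ℕ, x (k+1) ≤ ((k:ℝ)/((k:ℝ)+a)) * x k + (a/((k:ℝ)+a)) * ‖v k - l‖ := by
    intro k
    have hk : (0:ℝ) < (k:ℝ) + a := by positivity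
    have h1 : (0:ℝ) ≤ (k:ℝ)/((k:ℝ)+a) := by positivity
    have h2 : (0:ℝ) ≤ a/((k:ℝ)+a) := by positivity
    calc x (k+1) = ‖((k:ℝ)/((k:ℝ)+a)) • (q k - l) + (a/((k:ℝ)+a)) • (v k - l)‖ := by
          simp only [hx]; rw [key k]
    _ ≤ ‖((k:ℝ)/((k:ℝ)+a)) • (q k - l)‖ + ‖(a/((k:ℝ)+a)) • (v k - l)‖ := norm_add_le _ _
    _ = ((k:ℝ)/((k:ℝ)+a)) * x k + (a/((k:ℝ)+a)) * ‖v k - l‖ := by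
          rw [norm_smul, norm_smul, Real.norm_eq_abs, Real.norm_eq_abs,
            abs_of_nonneg h1, abs_of_nonneg h2]
  -- main estimate
  have main : ∀ (ε : ℝ), 0 < ε → ∀ (N : ℕ), 1 ≤ N → (∀ k, N ≤ k → ‖v k - l‖ ≤ ε) →
      ∀ n, N ≤ n → x n ≤ ((N:ℝ)/(n:ℝ)) * x N + ε := by
    intro ε hε N hN hvN
    intro n hn
    induction n, hn using Nat.le_induction with
    | base =>
        have hN0 : (0:ℝ) < (N:ℝ) := by exact_mod_cast hN
        have : (N:ℝ)/(N:ℝ) = 1 := div_self (ne_of_gt hN0)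
        rw [this]; linarith [hxnn N]
    | succ n hn ih =>
        have hn0 : (0:ℝ) < (n:ℝ) := by
          have : 1 ≤ n := le_trans hN hn
          exact_mod_cast this
        have hna : (0:ℝ) < (n:ℝ) + a := by positivity
        have h1 : (0:ℝ) ≤ (n:ℝ)/((n:ℝ)+a) := by positivity
        have h2 : (0:ℝ) ≤ a/((n:ℝ)+a) := by positivity
        have hvn : ‖v n - l‖ ≤ ε := hvN n hn
        have step1 : x (n+1) ≤ ((n:ℝ)/((n:ℝ)+a)) * x n + (a/((n:ℝ)+a)) * ε := by
          have := hrec n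
          nlinarith [mul_le_mul_of_nonneg_left hvn h2]
        have step2 : ((n:ℝ)/((n:ℝ)+a)) * x n ≤ ((n:ℝ)/((n:ℝ)+a)) * (((N:ℝ)/(n:ℝ)) * x N + ε) :=
          mul_le_mul_of_nonneg_left ih h1
        have eq1 : ((n:ℝ)/((n:ℝ)+a)) * (((N:ℝ)/(n:ℝ)) * x N + ε) + (a/((n:ℝ)+a)) * ε
            = ((N:ℝ)/((n:ℝ)+a)) * x N + ε := by
          field_simp
          ring
        have hle : ((N:ℝ)/((n:ℝ)+a)) * x N ≤ ((N:ℝ)/((n:ℝ)+1)) * x N := by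
          apply mul_le_mul_of_nonneg_right _ (hxnn N)
          apply div_le_div_of_nonneg_left (by positivity) (by positivity)
          linarith
        have : x (n+1) ≤ ((N:ℝ)/((n:ℝ)+a)) * x N + ε := by linarith
        have hcast : ((n+1 : ℕ):ℝ) = (n:ℝ) + 1 := by push_cast; ring
        rw [hcast]
        linarith
  -- conclude
  rw [NormedAddCommGroup.tendsto_atTop]
  intro ε hε
  rw [NormedAddCommGroup.tendsto_atTop] at hconv
  obtain ⟨N0, hN0⟩ := hconv (ε/2) (by linarith)
  set N : ℕ := max N0 1 with hNdef
  have hN1 : 1 ≤ N := le_max_right _ _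
  have hvN : ∀ k, N ≤ k → ‖v k - l‖ ≤ ε/2 := by
    intro k hk
    exact le_of_lt (hN0 k (le_trans (le_max_left _ _) hk))
  have hMl : (0:ℝ) ≤ M + ‖l‖ := le_trans (hxnn 0) (hC 0)
  obtain ⟨m, hm⟩ := exists_nat_gt (2 * (N:ℝ) * (M + ‖l‖) / ε)
  refine ⟨max N (m+1), fun n hn => ?_⟩
  have hnN : N ≤ n := le_trans (le_max_left _ _) hn
  have hnm : m + 1 ≤ n := le_trans (le_max_right _ _) hn
  have hn0 : (0:ℝ) < (n:ℝ) := by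
    have : 1 ≤ n := le_trans hN1 hnN
    exact_mod_cast this
  have hmain := main (ε/2) (by linarith) N hN1 hvN n hnN
  have hfrac : ((N:ℝ)/(n:ℝ)) * x N < ε/2 := by
    have hxN : x N ≤ M + ‖l‖ := hC N
    have hngt : 2 * (N:ℝ) * (M + ‖l‖) / ε < (n:ℝ) := by
      have : (m:ℝ) < (n:ℝ) := by exact_mod_cast Nat.lt_of_lt_of_le (Nat.lt_succ_self m) hnm
      linarith
    have h2 : 2 * (N:ℝ) * (M + ‖l‖) < ε * (n:ℝ) := by
      rw [div_lt_iff₀ hε] at hngt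
      linarith
    rw [div_mul_eq_mul_div, div_lt_iff₀ hn0]
    have hNnn : (0:ℝ) ≤ (N:ℝ) := Nat.cast_nonneg _
    nlinarith [mul_le_mul_of_nonneg_left hxN hNnn]
  calc ‖q n - l‖ = x n := rfl
  _ ≤ ((N:ℝ)/(n:ℝ)) * x N + ε/2 := hmain
  _ < ε := by linarith
end

section
/- Let a > 0 and q : [t₀, ∞) → H be continuously differentiable with q(t) + (t/a)·q'(t) → l ∈ H as t → ∞. Then q(t) → l as t → ∞. -/
open Filter Topology

theorem stmt_19
    {H : Type*} [NormedAddCommGroup H] [InnerProductSpace ℝ H] [CompleteSpace H]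
    (a t₀ : ℝ) (ha : 0 < a) (ht₀ : 0 < t₀)
    (q q' : ℝ → H) (l : H)
    (hderiv : ∀ t, t₀ ≤ t → HasDerivAt q (q' t) t)
    (hconv : Tendsto (fun t => q t + (t / a) • q' t) atTop (𝓝 l)) :
    Tendsto q atTop (𝓝 l) := by
  set g : ℝ → H := fun t => q t + (t / a) • q' t with hg
  set F : ℝ → H := fun t => (t ^ a) • (q t - l) with hF
  have hFd : ∀ x, t₀ ≤ x → HasDerivAt F ((a * x ^ (a - 1)) • (g x - l)) x := by
    intro x hx
    have hx0 : (0 : ℝ) < x := lt_of_lt_of_le ht₀ hx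
    have h1 : HasDerivAt (fun y : ℝ => y ^ a) (a * x ^ (a - 1)) x :=
      Real.hasDerivAt_rpow_const (Or.inl hx0.ne')
    have h2 : HasDerivAt (fun y => q y - l) (q' x) x := (hderiv x hx).sub_const l
    have h3 := h1.smul h2
    convert h3 using 1
    · funext y; rfl
    have hxa : a * x ^ (a - 1) * (x / a) = x ^ a := by
      calc a * x ^ (a - 1) * (x / a) = x ^ (a - 1) * x * (a / a) := by ring
        _ = x ^ ((a - 1) + 1) := by
            rw [div_self ha.ne', mul_one, Real.rpow_add_one hx0.ne']
        _ = x ^ a := by ring_nf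
    have hgl : g x - l = (q x - l) + (x / a) • q' x := by
      simp only [hg]; abel
    rw [hgl, smul_add, smul_smul, hxa]
    abel
  rw [Metric.tendsto_atTop]
  intro ε hε
  have hε4 : 0 < ε / 4 := by positivity
  obtain ⟨t₁, ht₁0, hεb⟩ : ∃ t₁, t₀ ≤ t₁ ∧ ∀ s, t₁ ≤ s → ‖g s - l‖ ≤ ε / 4 := by
    obtain ⟨N, hN⟩ := (Metric.tendsto_atTop.mp hconv) (ε / 4) hε4
    refine ⟨max t₀ N, le_max_left _ _, fun s hs => ?_⟩
    have := hN s (le_trans (le_max_right _ _) hs)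
    rw [dist_eq_norm] at this
    exact this.le
  have ht₁pos : 0 < t₁ := lt_of_lt_of_le ht₀ ht₁0
  have key : ∀ T, t₁ ≤ T → ‖F T - F t₁‖ ≤ ε / 4 * (T ^ a - t₁ ^ a) := by
    intro T hT
    have hB' : ∀ x ∈ Set.Ico t₁ T,
        HasDerivWithinAt (fun x => ε / 4 * (x ^ a - t₁ ^ a)) (ε / 4 * (a * x ^ (a - 1)))
          (Set.Ici x) x := by
      intro x hx
      have hx0 : (0 : ℝ) < x := lt_of_lt_of_le ht₁pos hx.1
      exact (((Real.hasDerivAt_rpow_const (p := a) (Or.inl hx0.ne')).sub_const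
        (t₁ ^ a)).const_mul (ε / 4)).hasDerivWithinAt
    have hf' : ∀ x ∈ Set.Ico t₁ T,
        HasDerivWithinAt (fun x => F x - F t₁) ((a * x ^ (a - 1)) • (g x - l))
          (Set.Ici x) x := fun x hx =>
      ((hFd x (le_trans ht₁0 hx.1)).sub_const (F t₁)).hasDerivWithinAt
    have hf : ContinuousOn (fun x => F x - F t₁) (Set.Icc t₁ T) := fun x hx =>
      ((hFd x (le_trans ht₁0 hx.1)).sub_const (F t₁)).continuousAt.continuousWithinAt
    have hBc : ContinuousOn (fun x => ε / 4 * (x ^ a - t₁ ^ a)) (Set.Icc t₁ T) := by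
      intro x hx
      have hx0 : (0 : ℝ) < x := lt_of_lt_of_le ht₁pos hx.1
      exact (((Real.hasDerivAt_rpow_const (p := a) (Or.inl hx0.ne')).sub_const
        (t₁ ^ a)).const_mul (ε / 4)).continuousAt.continuousWithinAt
    have bound : ∀ x ∈ Set.Ico t₁ T,
        ‖(a * x ^ (a - 1)) • (g x - l)‖ ≤ ε / 4 * (a * x ^ (a - 1)) := by
      intro x hx
      have hx0 : (0 : ℝ) < x := lt_of_lt_of_le ht₁pos hx.1
      have hc : 0 ≤ a * x ^ (a - 1) :=
        mul_nonneg ha.le (Real.rpow_pos_of_pos hx0 _).le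
      rw [norm_smul, Real.norm_eq_abs, abs_of_nonneg hc, mul_comm (ε / 4)]
      exact mul_le_mul_of_nonneg_left (hεb x hx.1) hc
    have ha0 : ‖F t₁ - F t₁‖ ≤ ε / 4 * (t₁ ^ a - t₁ ^ a) := by simp
    have := image_norm_le_of_norm_deriv_right_le_deriv_boundary' hf hf' ha0 hBc hB' bound
      (Set.right_mem_Icc.mpr hT)
    exact this
  -- choose N so that T^(-a) * ‖F t₁‖ is small
  have hten : Tendsto (fun T : ℝ => T ^ (-a) * ‖F t₁‖) atTop (𝓝 0) := by
    have := (tendsto_rpow_neg_atTop ha).mul_const ‖F t₁‖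
    simpa using this
  obtain ⟨N, hN⟩ := (Metric.tendsto_atTop.mp hten) (ε / 4) hε4
  refine ⟨max N t₁, fun T hT => ?_⟩
  have hTt₁ : t₁ ≤ T := le_trans (le_max_right _ _) hT
  have hT0 : (0 : ℝ) < T := lt_of_lt_of_le ht₁pos hTt₁
  have hTa : (0 : ℝ) < T ^ a := Real.rpow_pos_of_pos hT0 a
  have hqT : q T - l = (T ^ (-a)) • F T := by
    rw [hF]
    simp only
    rw [smul_smul, Real.rpow_neg hT0.le, inv_mul_cancel₀ hTa.ne', one_smul]
  have hFT : ‖F T‖ ≤ ‖F t₁‖ + ε / 4 * T ^ a := by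
    have h1 : ‖F T‖ ≤ ‖F t₁‖ + ‖F T - F t₁‖ := by
      have := norm_sub_norm_le (F T) (F t₁)
      linarith [norm_sub_norm_le (F T) (F t₁)]
    have h2 : ε / 4 * (T ^ a - t₁ ^ a) ≤ ε / 4 * T ^ a := by
      have : (0:ℝ) ≤ t₁ ^ a := (Real.rpow_pos_of_pos ht₁pos a).le
      nlinarith
    linarith [key T hTt₁]
  have hinv : (0 : ℝ) < T ^ (-a) := Real.rpow_pos_of_pos hT0 _
  have hmul : T ^ (-a) * T ^ a = 1 := by
    rw [Real.rpow_neg hT0.le, inv_mul_cancel₀ hTa.ne']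
  have hbound : dist (q T) l ≤ T ^ (-a) * ‖F t₁‖ + ε / 4 := by
    rw [dist_eq_norm, hqT, norm_smul, Real.norm_eq_abs, abs_of_pos hinv]
    calc T ^ (-a) * ‖F T‖ ≤ T ^ (-a) * (‖F t₁‖ + ε / 4 * T ^ a) :=
          mul_le_mul_of_nonneg_left hFT hinv.le
      _ = T ^ (-a) * ‖F t₁‖ + ε / 4 * (T ^ (-a) * T ^ a) := by ring
      _ = T ^ (-a) * ‖F t₁‖ + ε / 4 := by rw [hmul]; ring
  have hsmall : T ^ (-a) * ‖F t₁‖ < ε / 4 := by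
    have := hN T (le_trans (le_max_left _ _) hT)
    rwa [Real.dist_eq, sub_zero, abs_of_nonneg (by positivity)] at this
  linarith
end
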